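/- Fix a real ν > 0. Let (k_j) and (ℓ_j) be sequences of positive integers with k_j → ∞, 1 ≤ ℓ_j ≤ k_j for all j, and ℓ_j / k_j → 0. Then the ratio [ (1 − ν/k_j)^{k_j − ℓ_j} · H₂( (1 − ν/k_j)^{ℓ_j} ) ] / [ e^{−ν} · ν · (ℓ_j/k_j) · log(k_j/ℓ_j) ] converges to 1 as j → ∞. -/

import Mathlib

/-- Binary entropy function with natural logarithm. -/
noncomputable def binH (q : ℝ) : ℝ := -q * Real.log q - (1 - q) * Real.log (1 - q)

open Filter Real

private lemma gt_aux (P E a b c r M w : ℝ) (h1a : 1 - a ≠ 0) (hw : w ≠ 0)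
    (hr : r ≠ 0) (hM : M ≠ 0) (hE : E ≠ 0) :
    P * E * (-a * b / (1 - a) * M⁻¹ + -c / M) * ((1 - a) / (w * r))
      = P * (-a * b - (1 - a) * c) / (E⁻¹ * w * r * M) := by
  field_simp
  ring

theorem gt_mutual_information_small_ratio (ν : ℝ) (hν : 0 < ν)
    (k l : ℕ → ℕ) (hk1 : ∀ j, 1 ≤ k j) (hl1 : ∀ j, 1 ≤ l j) (hlk : ∀ j, l j ≤ k j)
    (hktop : Filter.Tendsto k Filter.atTop Filter.atTop)
    (hratio : Filter.Tendsto (fun j => (l j : ℝ) / (k j : ℝ)) Filter.atTop (nhds 0)) :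
    Filter.Tendsto
      (fun j => ((1 - ν / (k j : ℝ)) ^ (k j - l j) * binH ((1 - ν / (k j : ℝ)) ^ (l j)))
        / (Real.exp (-ν) * ν * ((l j : ℝ) / (k j : ℝ)) * Real.log ((k j : ℝ) / (l j : ℝ))))
      Filter.atTop (nhds 1) := by
  have hkR : Tendsto (fun j => (k j : ℝ)) atTop atTop :=
    tendsto_natCast_atTop_atTop.comp hktop
  -- notation
  set x : ℕ → ℝ := fun j => ν / (k j : ℝ) with hxdef
  set q : ℕ → ℝ := fun j => (1 - x j) ^ (l j) with hqdef
  set L : ℕ → ℝ := fun j => Real.log ((k j : ℝ) / (l j : ℝ)) with hLdef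
  set θ : ℕ → ℝ := fun j => (1 - q j) / (ν * ((l j : ℝ) / (k j : ℝ))) with hθdef
  -- basic per-j positivity
  have hkpos : ∀ j, (0 : ℝ) < (k j : ℝ) := fun j => by
    exact_mod_cast Nat.pos_of_ne_zero (by have := hk1 j; omega)
  have hlpos : ∀ j, (0 : ℝ) < (l j : ℝ) := fun j => by
    exact_mod_cast Nat.pos_of_ne_zero (by have := hl1 j; omega)
  have hxpos : ∀ j, 0 < x j := fun j => div_pos hν (hkpos j)
  -- eventually x ≤ 1/2
  have hxhalf : ∀ᶠ j in atTop, x j ≤ 1 / 2 := by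
    filter_upwards [hkR.eventually_ge_atTop (2 * ν)] with j hj
    rw [div_le_div_iff₀ (hkpos j) (by norm_num)]
    linarith
  have hq_pos : ∀ᶠ j in atTop, 0 < q j := by
    filter_upwards [hxhalf] with j hj
    exact pow_pos (by have := hxpos j; linarith) _
  have hq_lt1 : ∀ᶠ j in atTop, q j < 1 := by
    filter_upwards [hxhalf] with j hj
    have h0 : 0 ≤ 1 - x j := by have := hxpos j; linarith
    have h1 : 1 - x j < 1 := by have := hxpos j; linarith
    exact pow_lt_one₀ h0 h1 (by have := hl1 j; omega)
  -- Bernoulli lower bound : 1 - ν * (l/k) ≤ q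
  have hbern : ∀ᶠ j in atTop, 1 - ν * ((l j : ℝ) / (k j : ℝ)) ≤ q j := by
    filter_upwards [hxhalf] with j hj
    have h := one_add_mul_le_pow (a := -x j) (by have := hxpos j; linarith) (l j)
    have : 1 - (l j : ℝ) * x j ≤ (1 - x j) ^ (l j) := by
      simpa [sub_eq_add_neg, mul_neg] using h
    have hx : (l j : ℝ) * x j = ν * ((l j : ℝ) / (k j : ℝ)) := by
      field_simp [hxdef]; ring
    linarith [this, hx ▸ this]
  -- q → 1
  have hq1 : Tendsto q atTop (nhds 1) := by
    have hlow : Tendsto (fun j => 1 - ν * ((l j : ℝ) / (k j : ℝ))) atTop (nhds 1) := by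
      have := (tendsto_const_nhds (x := (1:ℝ)) (f := atTop)).sub
        ((tendsto_const_nhds (x := ν) (f := atTop)).mul hratio)
      simpa using this
    have hup : ∀ᶠ j in atTop, q j ≤ 1 := by
      filter_upwards [hq_lt1] with j hj; exact hj.le
    exact tendsto_of_tendsto_of_tendsto_of_le_of_le' hlow tendsto_const_nhds hbern hup
  -- bounds on 1 - q : q * (ν * (l/k)) ≤ 1 - q ≤ ν * (l/k)
  have hlxeq : ∀ j, (l j : ℝ) * x j = ν * ((l j : ℝ) / (k j : ℝ)) := fun j => by
    field_simp [hxdef]; ring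
  have hθ_bounds : ∀ᶠ j in atTop, q j ≤ θ j ∧ θ j ≤ 1 := by
    filter_upwards [hxhalf, hq_pos] with j hj hqj
    have hxj := hxpos j
    have h1x : (0 : ℝ) < 1 - x j := by linarith
    have hlx : 0 < (l j : ℝ) * x j := mul_pos (hlpos j) hxj
    -- upper : 1 - q ≤ l * x
    have hup : 1 - q j ≤ (l j : ℝ) * x j := by
      have h := one_add_mul_le_pow (a := -x j) (by linarith) (l j)
      have : 1 - (l j : ℝ) * x j ≤ q j := by
        simpa [hqdef, sub_eq_add_neg, mul_neg] using h
      linarith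
    -- lower : q * l * x ≤ 1 - q
    have hlow : q j * ((l j : ℝ) * x j) ≤ 1 - q j := by
      have h := one_add_mul_le_pow (a := x j / (1 - x j))
        (by have : 0 ≤ x j / (1 - x j) := div_nonneg hxj.le h1x.le; linarith) (l j)
      have heq : (1 + x j / (1 - x j)) = (1 - x j)⁻¹ := by field_simp; ring
      have h2 : 1 + (l j : ℝ) * (x j / (1 - x j)) ≤ (q j)⁻¹ := by
        rw [heq] at h
        simpa [hqdef, inv_pow] using h
      have h3 : q j * (1 + (l j : ℝ) * (x j / (1 - x j))) ≤ 1 := by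
        calc q j * (1 + (l j : ℝ) * (x j / (1 - x j))) ≤ q j * (q j)⁻¹ :=
              mul_le_mul_of_nonneg_left h2 hqj.le
          _ = 1 := mul_inv_cancel₀ (ne_of_gt hqj)
      have h4 : q j * ((l j : ℝ) * x j) ≤ q j * ((l j : ℝ) * (x j / (1 - x j))) := by
        apply mul_le_mul_of_nonneg_left _ hqj.le
        apply mul_le_mul_of_nonneg_left _ (hlpos j).le
        rw [le_div_iff₀ h1x]
        nlinarith
      nlinarith
    constructor
    · rw [hθdef]
      simp only
      rw [le_div_iff₀ (by rw [← hlxeq]; exact hlx)]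
      rw [← hlxeq]
      linarith
    · rw [hθdef]
      simp only
      rw [div_le_one (by rw [← hlxeq]; exact hlx)]
      rw [← hlxeq]
      linarith
  have hθ1 : Tendsto θ atTop (nhds 1) := by
    refine tendsto_of_tendsto_of_tendsto_of_le_of_le' hq1 tendsto_const_nhds ?_ ?_
    · filter_upwards [hθ_bounds] with j hj; exact hj.1
    · filter_upwards [hθ_bounds] with j hj; exact hj.2
  have hθpos : ∀ᶠ j in atTop, 0 < θ j := by
    filter_upwards [hθ_bounds, hq_pos] with j hj hq; exact lt_of_lt_of_le hq hj.1
  -- L → ∞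
  have hkl : Tendsto (fun j => (k j : ℝ) / (l j : ℝ)) atTop atTop := by
    have hpos : ∀ᶠ j in atTop, (l j : ℝ) / (k j : ℝ) ∈ Set.Ioi (0 : ℝ) :=
      Eventually.of_forall fun j => div_pos (hlpos j) (hkpos j)
    have := (tendsto_nhdsWithin_iff.mpr ⟨hratio, hpos⟩).inv_tendsto_nhdsGT_zero
    simpa [Pi.inv_def, inv_div] using this
  have hLtop : Tendsto L atTop atTop := Real.tendsto_log_atTop.comp hkl
  have hLpos : ∀ᶠ j in atTop, 0 < L j := hLtop.eventually_gt_atTop 0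
  -- A := (1-x)^(k-l) * exp ν → 1
  have hA : Tendsto (fun j => (1 - x j) ^ (k j - l j) * Real.exp ν) atTop (nhds 1) := by
    have hbase : Tendsto (fun j => (1 - x j) ^ (k j)) atTop (nhds (Real.exp (-ν))) := by
      have h := (Real.tendsto_one_add_div_pow_exp (-ν)).comp hktop
      refine h.congr fun j => ?_
      show (1 + -ν / (k j : ℝ)) ^ (k j) = (1 - ν / (k j : ℝ)) ^ (k j)
      congr 1
      ring
    have hdiv : Tendsto (fun j => (1 - x j) ^ (k j) / q j) atTop (nhds (Real.exp (-ν))) := by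
      have := hbase.div hq1 one_ne_zero; simp only [div_one] at this; exact this
    have heq : ∀ᶠ j in atTop, (1 - x j) ^ (k j) / q j = (1 - x j) ^ (k j - l j) := by
      filter_upwards [hxhalf] with j hj
      rw [hqdef]
      simp only
      rw [eq_comm, pow_sub₀ _ (by have := hxpos j; intro h; rw [sub_eq_zero] at h; nlinarith) (hlk j)]
      rw [div_eq_mul_inv]
    have := (hdiv.congr' heq).mul (tendsto_const_nhds (x := Real.exp ν) (f := atTop))
    simpa [← Real.exp_add] using this
  -- f1 → 0
  have hf1 : Tendsto (fun j => (-(q j) * Real.log (q j) / (1 - q j)) * (L j)⁻¹) atTop (nhds 0) := by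
    have hinv : Tendsto (fun j => (L j)⁻¹) atTop (nhds 0) := hLtop.inv_tendsto_atTop
    refine tendsto_of_tendsto_of_tendsto_of_le_of_le' tendsto_const_nhds hinv ?_ ?_
    · filter_upwards [hq_pos, hq_lt1, hLpos] with j h0 h1 hL
      have hlq : Real.log (q j) ≤ 0 := Real.log_nonpos h0.le h1.le
      have h1q : 0 < 1 - q j := by linarith
      have hnum : 0 ≤ -q j * Real.log (q j) := by nlinarith
      exact mul_nonneg (div_nonneg hnum h1q.le) (inv_pos.mpr hL).le
    · filter_upwards [hq_pos, hq_lt1, hLpos] with j h0 h1 hL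
      have h1q : 0 < 1 - q j := by linarith
      have hlog : -Real.log (q j) ≤ (q j)⁻¹ - 1 := by
        have := Real.log_le_sub_one_of_pos (inv_pos.mpr h0)
        rwa [Real.log_inv] at this
      have hnum : -(q j) * Real.log (q j) ≤ 1 - q j := by
        have := mul_le_mul_of_nonneg_left hlog h0.le
        have heq : q j * ((q j)⁻¹ - 1) = 1 - q j := by field_simp
        nlinarith [this]
      have hg : -(q j) * Real.log (q j) / (1 - q j) ≤ 1 := by
        rw [div_le_one h1q]; exact hnum
      calc (-(q j) * Real.log (q j) / (1 - q j)) * (L j)⁻¹ ≤ 1 * (L j)⁻¹ :=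
            mul_le_mul_of_nonneg_right hg (inv_pos.mpr hL).le
        _ = (L j)⁻¹ := one_mul _
  -- t2 → 1
  have ht2 : Tendsto (fun j => 1 - (Real.log ν + Real.log (θ j)) / (L j)) atTop (nhds 1) := by
    have hlogθ : Tendsto (fun j => Real.log (θ j)) atTop (nhds 0) := by
      have := (Real.continuousAt_log one_ne_zero).tendsto.comp hθ1
      rw [Real.log_one] at this; exact this
    have hnum : Tendsto (fun j => Real.log ν + Real.log (θ j)) atTop (nhds (Real.log ν + 0)) :=
      tendsto_const_nhds.add hlogθ
    have := (tendsto_const_nhds (x := (1:ℝ)) (f := atTop)).sub (hnum.div_atTop hLtop)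
    simpa using this
  -- combine
  have htot : Tendsto (fun j => ((1 - x j) ^ (k j - l j) * Real.exp ν) *
      ((-(q j) * Real.log (q j) / (1 - q j)) * (L j)⁻¹ +
        (1 - (Real.log ν + Real.log (θ j)) / (L j))) * θ j) atTop (nhds 1) := by
    have := (hA.mul (hf1.add ht2)).mul hθ1
    simpa using this
  refine htot.congr' ?_
  filter_upwards [hxhalf, hq_pos, hq_lt1, hLpos, hθpos] with j hx2 hq0 hq1' hL hθp
  have h1q : 0 < 1 - q j := by linarith
  have hklne : ((l j : ℝ) / (k j : ℝ)) ≠ 0 := ne_of_gt (div_pos (hlpos j) (hkpos j))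
  have hLne : L j ≠ 0 := ne_of_gt hL
  -- rewrite log θ
  have hlogθ : Real.log (θ j) = Real.log (1 - q j) - Real.log ν - Real.log ((l j : ℝ) / (k j : ℝ)) := by
    rw [hθdef]
    simp only
    rw [Real.log_div (ne_of_gt h1q)
        (ne_of_gt (mul_pos hν (div_pos (hlpos j) (hkpos j)))),
      Real.log_mul (ne_of_gt hν) hklne]
    ring
  have hloglk : Real.log ((l j : ℝ) / (k j : ℝ)) = -L j := by
    rw [hLdef]
    simp only
    rw [← Real.log_inv, inv_div]
  have ht2eq : 1 - (Real.log ν + Real.log (θ j)) / (L j) = -Real.log (1 - q j) / L j := by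
    rw [hlogθ, hloglk]
    field_simp
    ring
  rw [ht2eq, binH]
  rw [hθdef]
  simp only
  have hexp : Real.exp (-ν) = (Real.exp ν)⁻¹ := Real.exp_neg ν
  rw [hexp]
  exact gt_aux _ _ _ _ _ _ _ _ (ne_of_gt h1q) (ne_of_gt hν) hklne hLne (Real.exp_ne_zero ν)
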